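/- With the Batchcomp assorter A defined by A(B_i) = 1/2 + (M + a_true(B_i) - a_rep(B_i))/(2(w - M)) where M = a_rep(B) - 1/2 and w - M > 0, the size-weighted mean of A over all batches satisfies A(B) = 1/2 + (a_true(B) - 1/2)/(2(w - M)). Consequently, a_true(B) ≤ 1/2 implies A(B) ≤ 1/2, and a_true(B) > 1/2 implies A(B) > 1/2. -/
import Mathlib


/-- The size-weighted mean of the Batchcomp assorter satisfies
`A(B) = 1/2 + (a_true(B) - 1/2)/(2(w - M))`; consequently `a_true(B) ≤ 1/2` implies
`A(B) ≤ 1/2` and `a_true(B) > 1/2` implies `A(B) > 1/2`. -/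
theorem batchcomp_mean_identity {ι : Type*} [Fintype ι]
    (size : ι → ℕ) (arep atrue : ι → ℝ)
    (n : ℝ) (hn : n = ∑ i, (size i : ℝ)) (hnpos : 0 < n)
    (arepB atrueB : ℝ)
    (harepB : arepB = (1 / n) * ∑ i, (size i : ℝ) * arep i)
    (hatrueB : atrueB = (1 / n) * ∑ i, (size i : ℝ) * atrue i)
    (M w : ℝ) (hM : M = arepB - 1 / 2) (hwM : 0 < w - M)
    (A : ι → ℝ) (hA : ∀ i, A i = 1 / 2 + (M + atrue i - arep i) / (2 * (w - M)))
    (AB : ℝ) (hAB : AB = (1 / n) * ∑ i, (size i : ℝ) * A i) :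
    AB = 1 / 2 + (atrueB - 1 / 2) / (2 * (w - M)) ∧
      (atrueB ≤ 1 / 2 → AB ≤ 1 / 2) ∧
      (1 / 2 < atrueB → 1 / 2 < AB) := by
  have hn' : n ≠ 0 := ne_of_gt hnpos
  have hd : w - M ≠ 0 := ne_of_gt hwM
  have h1 : ∑ i, (size i : ℝ) * atrue i = n * atrueB := by
    rw [hatrueB]; field_simp
  have h2 : ∑ i, (size i : ℝ) * arep i = n * arepB := by
    rw [harepB]; field_simp
  have h3 : ∑ i, (size i : ℝ) = n := hn.symm
  have key : AB = 1 / 2 + (atrueB - 1 / 2) / (2 * (w - M)) := by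
    rw [hAB]
    have hterm : ∀ i, (size i : ℝ) * A i =
        (size i : ℝ) * (1 / 2) +
          ((size i : ℝ) * M + (size i : ℝ) * atrue i - (size i : ℝ) * arep i) / (2 * (w - M)) := by
      intro i; rw [hA i]; ring
    rw [Finset.sum_congr rfl fun i _ => hterm i, Finset.sum_add_distrib,
      ← Finset.sum_div, Finset.sum_sub_distrib, Finset.sum_add_distrib,
      ← Finset.sum_mul, ← Finset.sum_mul, h1, h2, h3, hM]
    field_simp
    ring
  refine ⟨key, ?_, ?_⟩
  · intro h
    have hpos : 0 < 2 * (w - M) := by linarith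
    have : (atrueB - 1 / 2) / (2 * (w - M)) ≤ 0 :=
      div_nonpos_of_nonpos_of_nonneg (by linarith) hpos.le
    linarith [key]
  · intro h
    have hpos : 0 < 2 * (w - M) := by linarith
    have : 0 < (atrueB - 1 / 2) / (2 * (w - M)) := div_pos (by linarith) hpos
    linarith [key]
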